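/- Let γ = (γ_1,...,γ_m) and δ = (δ_1,...,δ_m) encode partitions of b with parts at most m, where γ_i (resp. δ_i) is the number of parts of size i, so ∑ i·γ_i = ∑ i·δ_i = b. Then the transfer coefficient a_{γ,δ} equals ∏_{i=1}^m C((γ_i + ... + γ_m) + 1 − (δ_{i+1} + ... + δ_m), δ_i). -/

import Mathlib

open Finset

/-- The finset of valid families. -/
def validFam {α : Type*} [DecidableEq α] {n : ℕ} (P : Fin n → Finset α) (d : Fin n → ℕ) :
    Finset (Fin n → Finset α) :=
  (Fintype.piFinset fun i => (P i).powersetCard (d i)).filter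
    (fun S => ∀ i j, i ≠ j → Disjoint (S i) (S j))

lemma mem_validFam {α : Type*} [DecidableEq α] {n : ℕ} {P : Fin n → Finset α} {d : Fin n → ℕ}
    {S : Fin n → Finset α} :
    S ∈ validFam P d ↔ (∀ i, S i ⊆ P i ∧ (S i).card = d i) ∧
      (∀ i j, i ≠ j → Disjoint (S i) (S j)) := by
  simp [validFam, Fintype.mem_piFinset, mem_powersetCard]

lemma sum_Ioi_eq_sum_ite {N : ℕ} (x : Fin N) (f : Fin N → ℕ) :
    ∑ j ∈ Finset.Ioi x, f j = ∑ j, if x < j then f j else 0 := by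
  rw [show (Finset.Ioi x : Finset (Fin N)) = Finset.univ.filter (fun j => x < j) from by
    ext j; simp, Finset.sum_filter]

lemma Ioi_castSucc_sum (n : ℕ) (d : Fin (n+1) → ℕ) (i : Fin n) :
    ∑ j ∈ Finset.Ioi i.castSucc, d j
      = d (Fin.last n) + ∑ j ∈ Finset.Ioi i, d j.castSucc := by
  rw [sum_Ioi_eq_sum_ite, sum_Ioi_eq_sum_ite, Fin.sum_univ_castSucc]
  simp only [Fin.castSucc_lt_castSucc_iff, Fin.castSucc_lt_last, if_true]
  omega

lemma validFam_card {α : Type*} [DecidableEq α] :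
    ∀ (n : ℕ) (P : Fin n → Finset α) (d : Fin n → ℕ),
    (∀ i j, i ≤ j → P j ⊆ P i) →
    (validFam P d).card = ∏ i, ((P i).card - ∑ j ∈ Finset.Ioi i, d j).choose (d i) := by
  intro n
  induction n with
  | zero =>
    intro P d _
    rw [Fin.prod_univ_zero]
    rw [Finset.card_eq_one]
    refine ⟨fun i => i.elim0, ?_⟩
    ext S
    simp only [mem_validFam, Finset.mem_singleton]
    constructor
    · intro _; funext i; exact i.elim0
    · rintro rfl; exact ⟨fun i => i.elim0, fun i => i.elim0⟩
  | succ n ih =>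
    intro P d hP
    classical
    have hmap : ∀ S ∈ validFam P d,
        S (Fin.last n) ∈ (P (Fin.last n)).powersetCard (d (Fin.last n)) := by
      intro S hS
      rw [mem_validFam] at hS
      exact mem_powersetCard.2 ⟨(hS.1 _).1, (hS.1 _).2⟩
    rw [Finset.card_eq_sum_card_fiberwise hmap]
    have hfiber : ∀ T ∈ (P (Fin.last n)).powersetCard (d (Fin.last n)),
        ((validFam P d).filter (fun S => S (Fin.last n) = T)).card
          = ∏ i : Fin n, ((P i.castSucc).card - d (Fin.last n)
              - ∑ j ∈ Finset.Ioi i, d j.castSucc).choose (d i.castSucc) := by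
      intro T hT
      obtain ⟨hTP, hTc⟩ := mem_powersetCard.1 hT
      have key : ((validFam P d).filter (fun S => S (Fin.last n) = T)).card
          = (validFam (fun i : Fin n => P i.castSucc \ T) (fun i => d i.castSucc)).card := by
        refine Finset.card_nbij' (fun S i => S i.castSucc) (fun S' => Fin.snoc S' T) ?_ ?_ ?_ ?_
        · intro S hS
          rw [Finset.mem_coe, Finset.mem_filter, mem_validFam] at hS
          obtain ⟨⟨h1, h2⟩, h3⟩ := hS
          rw [Finset.mem_coe, mem_validFam]
          refine ⟨fun i => ⟨?_, (h1 _).2⟩, fun i j hij => h2 _ _ (by simpa using hij)⟩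
          intro x hx
          rw [Finset.mem_sdiff]
          refine ⟨(h1 _).1 hx, fun hxT => ?_⟩
          have := h2 i.castSucc (Fin.last n) (Fin.castSucc_lt_last i).ne
          rw [h3] at this
          exact (Finset.disjoint_left.1 this) hx hxT
        · intro S' hS'
          rw [Finset.mem_coe, mem_validFam] at hS'
          obtain ⟨h1, h2⟩ := hS'
          rw [Finset.mem_coe, Finset.mem_filter, mem_validFam]
          refine ⟨⟨?_, ?_⟩, by simp⟩
          · intro i
            refine Fin.lastCases ?_ (fun k => ?_) i
            · simpa using ⟨hTP, hTc⟩
            · simp only [Fin.snoc_castSucc]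
              exact ⟨((h1 k).1).trans (Finset.sdiff_subset), (h1 k).2⟩
          · intro i j
            refine Fin.lastCases ?_ (fun k => ?_) i <;>
              refine Fin.lastCases ?_ (fun l => ?_) j <;> intro hij
            · exact absurd rfl hij
            · simp only [Fin.snoc_last, Fin.snoc_castSucc]
              exact (Finset.sdiff_disjoint.mono_left (h1 l).1).symm
            · simp only [Fin.snoc_last, Fin.snoc_castSucc]
              exact Finset.sdiff_disjoint.mono_left (h1 k).1
            · simp only [Fin.snoc_castSucc]
              exact h2 k l (fun h => hij (by rw [h]))
        · intro S hS
          rw [Finset.mem_coe, Finset.mem_filter] at hS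
          funext i
          refine Fin.lastCases ?_ (fun k => ?_) i
          · simpa using hS.2.symm
          · simp
        · intro S' _
          funext i
          simp
      rw [key, ih _ _ ?_]
      · refine Finset.prod_congr rfl fun i _ => ?_
        congr 1
        rw [Finset.card_sdiff_of_subset (hTP.trans (hP _ _ (Fin.le_last _))), hTc]
      · intro i j hij
        exact Finset.sdiff_subset_sdiff (hP _ _ (by simpa using hij)) le_rfl
    rw [Finset.sum_congr rfl hfiber, Finset.sum_const, Finset.card_powersetCard,
      Fin.prod_univ_castSucc]
    rw [smul_eq_mul, mul_comm]
    congr 1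
    · refine Finset.prod_congr rfl fun i _ => ?_
      rw [Ioi_castSucc_sum, Nat.sub_sub]
    · rw [show (Finset.Ioi (Fin.last n) : Finset (Fin (n+1))) = ∅ from by
        ext j; simp [(Fin.le_last j).not_gt]]
      simp

theorem transfer_coefficient_formula (m b : ℕ) (hm : 0 < m) (γ δ : Fin m → ℕ)
    (hγ : ∑ i : Fin m, ((i : ℕ) + 1) * γ i = b)
    (hδ : ∑ i : Fin m, ((i : ℕ) + 1) * δ i = b) :
    {S : Fin m → Finset (Fin m × ℕ) |
        (∀ i, (S i).card = δ i) ∧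
        (∀ i, ∀ p ∈ S i, p.2 < (γ p.1 + if (p.1 : ℕ) = m - 1 then 1 else 0) ∧ i ≤ p.1) ∧
        (∀ i j, i ≠ j → Disjoint (S i) (S j))}.ncard =
      ∏ i : Fin m,
        Nat.choose ((∑ j ∈ Finset.Ici i, γ j) + 1 - ∑ j ∈ Finset.Ioi i, δ j) (δ i) := by
  classical
  obtain ⟨n, rfl⟩ : ∃ n, m = n + 1 := ⟨m - 1, (Nat.succ_pred_eq_of_pos hm).symm⟩
  set γ' : Fin (n+1) → ℕ := fun j => γ j + if (j : ℕ) = n then 1 else 0 with hγ'def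
  set P : Fin (n+1) → Finset (Fin (n+1) × ℕ) := fun i =>
    (Finset.Ici i).biUnion (fun j => {j} ×ˢ Finset.range (γ' j)) with hPdef
  have hmemP : ∀ (i : Fin (n+1)) (p : Fin (n+1) × ℕ),
      p ∈ P i ↔ i ≤ p.1 ∧ p.2 < γ' p.1 := by
    intro i p
    simp only [hPdef, Finset.mem_biUnion, Finset.mem_Ici, Finset.mem_product,
      Finset.mem_singleton, Finset.mem_range]
    constructor
    · rintro ⟨j, hj, h1, h2⟩
      obtain ⟨rfl⟩ : p.1 = j := h1
      exact ⟨hj, h2⟩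
    · rintro ⟨h1, h2⟩
      exact ⟨p.1, h1, rfl, h2⟩
  have hset : {S : Fin (n+1) → Finset (Fin (n+1) × ℕ) |
        (∀ i, (S i).card = δ i) ∧
        (∀ i, ∀ p ∈ S i, p.2 < (γ p.1 + if (p.1 : ℕ) = n + 1 - 1 then 1 else 0) ∧ i ≤ p.1) ∧
        (∀ i j, i ≠ j → Disjoint (S i) (S j))} = ↑(validFam P δ) := by
    ext S
    simp only [Set.mem_setOf_eq, Finset.coe_sort_coe, Finset.mem_coe, mem_validFam]
    constructor
    · rintro ⟨h1, h2, h3⟩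
      refine ⟨fun i => ⟨fun p hp => ?_, h1 i⟩, h3⟩
      rw [hmemP]
      exact ⟨(h2 i p hp).2, (h2 i p hp).1⟩
    · rintro ⟨h1, h2⟩
      refine ⟨fun i => (h1 i).2, fun i p hp => ?_, h2⟩
      have := (hmemP i p).1 ((h1 i).1 hp)
      exact ⟨this.2, this.1⟩
  rw [hset, Set.ncard_coe_finset]
  have hmono : ∀ i j : Fin (n+1), i ≤ j → P j ⊆ P i := by
    intro i j hij p hp
    rw [hmemP] at hp ⊢
    exact ⟨hij.trans hp.1, hp.2⟩
  rw [validFam_card _ P δ hmono]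
  refine Finset.prod_congr rfl fun i _ => ?_
  congr 1
  have hPcard : (P i).card = (∑ j ∈ Finset.Ici i, γ j) + 1 := by
    rw [hPdef]
    rw [Finset.card_biUnion]
    · have : ∀ j ∈ Finset.Ici i, ({j} ×ˢ Finset.range (γ' j)).card = γ' j := by
        intro j _
        rw [Finset.card_product, Finset.card_singleton, Finset.card_range, one_mul]
      rw [Finset.sum_congr rfl this, hγ'def]
      rw [Finset.sum_add_distrib]
      congr 1
      have : ∀ j ∈ Finset.Ici i, (if (j : ℕ) = n then 1 else 0)
          = if j = Fin.last n then 1 else 0 := by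
        intro j _
        congr 1
        simp [Fin.ext_iff]
      rw [Finset.sum_congr rfl this, Finset.sum_ite_eq' (Finset.Ici i) (Fin.last n) (fun _ => 1)]
      simp [Fin.le_last]
    · intro x _ y _ hxy
      rw [Function.onFun, Finset.disjoint_left]
      rintro p hp hq
      rw [Finset.mem_product, Finset.mem_singleton] at hp hq
      exact hxy (hp.1 ▸ hq.1)
  rw [hPcard]
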